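/- Let (S,L) be a Lie-Rinehart algebra over R and suppose λ_L, λ_S : L → S both satisfy λ(sα) = sλ(α) − ∂_α(s) and λ([α,β]) = ∂_α(λ(β)) − ∂_β(λ(α)). Setting ν_α := α + λ_L(α) − λ_S(α) ∈ S ⊕ L ⊂ U, the following relations hold in the enveloping algebra U: [ν_α, ν_β] = ν_{[α,β]}, ν_{sα} = s ν_α, and [ν_α, s] = ∂_α(s), for all s ∈ S and α, β ∈ L. -/
import Mathlib


/-- Let `(S,L)` be a Lie-Rinehart algebra over `R` with enveloping algebra `U`
(encoded via `ιS`, `ιL` and the defining relations), and let `λ_L, λ_S : L → S` both satisfy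
`λ(sα) = sλ(α) − ∂_α(s)` and `λ(⁅α,β⁆) = ∂_α(λ(β)) − ∂_β(λ(α))`.  Setting
`ν_α := α + λ_L(α) − λ_S(α) ∈ U`, the relations `[ν_α, ν_β] = ν_{[α,β]}`,
`ν_{sα} = s ν_α` and `[ν_α, s] = ∂_α(s)` hold in `U`. -/
theorem stmt5 {R S L U : Type*} [CommRing R] [CommRing S] [Algebra R S]
    [LieRing L] [LieAlgebra R L] [Module S L] [Ring U] [Algebra R U]
    (D : L → Derivation R S S)
    (hDsmul : ∀ (s : S) (α : L), D (s • α) = s • D α)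
    (hDlie : ∀ α β : L, D ⁅α, β⁆ = ⁅D α, D β⁆)
    (ιS : S →ₐ[R] U) (ιL : L →ₗ[R] U)
    (hrel1 : ∀ α β : L, ιL ⁅α, β⁆ = ιL α * ιL β - ιL β * ιL α)
    (hrel2 : ∀ (s : S) (α : L), ιL (s • α) = ιS s * ιL α)
    (hrel3 : ∀ (α : L) (s : S), ιL α * ιS s - ιS s * ιL α = ιS (D α s))
    (lamL lamS : L → S)
    (hL1 : ∀ (s : S) (α : L), lamL (s • α) = s * lamL α - D α s)
    (hL2 : ∀ α β : L, lamL ⁅α, β⁆ = D α (lamL β) - D β (lamL α))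
    (hS1 : ∀ (s : S) (α : L), lamS (s • α) = s * lamS α - D α s)
    (hS2 : ∀ α β : L, lamS ⁅α, β⁆ = D α (lamS β) - D β (lamS α)) :
    ∀ (s : S) (α β : L),
      ((ιL α + ιS (lamL α) - ιS (lamS α)) * (ιL β + ιS (lamL β) - ιS (lamS β))
          - (ιL β + ιS (lamL β) - ιS (lamS β)) * (ιL α + ιS (lamL α) - ιS (lamS α))
        = ιL ⁅α, β⁆ + ιS (lamL ⁅α, β⁆) - ιS (lamS ⁅α, β⁆)) ∧
      (ιL (s • α) + ιS (lamL (s • α)) - ιS (lamS (s • α))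
        = ιS s * (ιL α + ιS (lamL α) - ιS (lamS α))) ∧
      ((ιL α + ιS (lamL α) - ιS (lamS α)) * ιS s
          - ιS s * (ιL α + ιS (lamL α) - ιS (lamS α))
        = ιS (D α s)) := by
  intro s α β
  have hc : ∀ t u : S, ιS t * ιS u = ιS u * ιS t := fun t u => by
    rw [← map_mul, ← map_mul, mul_comm]
  refine ⟨?_, ?_, ?_⟩
  · rw [hrel1, hL2, hS2, map_sub, map_sub, ← hrel3 α (lamL β), ← hrel3 α (lamS β),
      ← hrel3 β (lamL α), ← hrel3 β (lamS α)]
    linear_combination (norm := noncomm_ring)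
      hc (lamL α) (lamL β) - hc (lamL α) (lamS β) - hc (lamS α) (lamL β)
        + hc (lamS α) (lamS β)
  · rw [hrel2, hL1, hS1, map_sub, map_sub, map_mul, map_mul]
    noncomm_ring
  · rw [← hrel3 α s]
    linear_combination (norm := noncomm_ring) hc (lamL α) s - hc (lamS α) s
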